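/- arXiv:1507.06602 — 2 statements merged into one kernel-verified Lean document; each statement's English description precedes it below -/
import Mathlib

section
/- For every natural number n ≥ 2, the comma category (Δ_{s,≤1})_{/[n]} is connected. More precisely: every object [0] → [n] is connected by a zig-zag of morphisms to an object of the form [1] → [n], and any two morphisms f, g : [1] → [n] are connected by a zig-zag of morphisms in the comma category. -/
open CategoryTheory

/-- The semisimplicial category `Δ_s`: objects are `[n] = Fin (n+1)` and morphisms
are strictly monotone maps. -/
structure DeltaS where
  len : ℕ

instance : Category DeltaS where
  Hom m n := {f : Fin (m.len + 1) → Fin (n.len + 1) // StrictMono f}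
  id m := ⟨id, strictMono_id⟩
  comp f g := ⟨g.1 ∘ f.1, g.2.comp f.2⟩
  id_comp f := rfl
  comp_id f := rfl
  assoc f g h := rfl

/-- The full subcategory `Δ_{s,≤1}` of `Δ_s` spanned by `[0]` and `[1]`. -/
def DeltaSLe1 := ObjectProperty.FullSubcategory (fun m : DeltaS => m.len ≤ 1)

instance : Category DeltaSLe1 := ObjectProperty.FullSubcategory.category _

/-- The inclusion `Δ_{s,≤1} ⥤ Δ_s`. -/
def deltaSIncl : DeltaSLe1 ⥤ DeltaS := ObjectProperty.ι _

theorem fin1_eq {i j : Fin (0+1)} : i = j := Fin.ext (by omega)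

theorem sm_fin1 {α : Type*} [Preorder α] (f : Fin (0+1) → α) : StrictMono f :=
  fun i j h => absurd (fin1_eq : i = j) h.ne

def obj0 : DeltaSLe1 := ⟨⟨0⟩, by norm_num⟩
def obj1 : DeltaSLe1 := ⟨⟨1⟩, by norm_num⟩

def pt {n : ℕ} (a : Fin (n+1)) : CostructuredArrow deltaSIncl (DeltaS.mk n) :=
  CostructuredArrow.mk (Y := obj0)
    (⟨fun _ => a, sm_fin1 _⟩ :
      (⟨0⟩ : DeltaS) ⟶ DeltaS.mk n)

def edge {n : ℕ} (a b : Fin (n+1)) (h : a < b) :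
    CostructuredArrow deltaSIncl (DeltaS.mk n) :=
  CostructuredArrow.mk (Y := obj1)
    (⟨![a, b], by
      intro i j hij
      fin_cases i <;> fin_cases j <;> simp_all⟩ : (⟨1⟩ : DeltaS) ⟶ DeltaS.mk n)

def hom01 : (⟨0⟩ : DeltaS) ⟶ (⟨1⟩ : DeltaS) :=
  ⟨fun _ => 0, sm_fin1 _⟩

def hom01' : (⟨0⟩ : DeltaS) ⟶ (⟨1⟩ : DeltaS) :=
  ⟨fun _ => 1, sm_fin1 _⟩

def ptLeft {n : ℕ} (a b : Fin (n+1)) (h : a < b) : pt a ⟶ edge a b h :=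
  CostructuredArrow.homMk (ObjectProperty.homMk (X := obj0) (Y := obj1) hom01 : obj0 ⟶ obj1)
    (by
      apply Subtype.ext
      funext i
      rfl)

def ptRight {n : ℕ} (a b : Fin (n+1)) (h : a < b) : pt b ⟶ edge a b h :=
  CostructuredArrow.homMk (ObjectProperty.homMk (X := obj0) (Y := obj1) hom01' : obj0 ⟶ obj1)
    (by
      apply Subtype.ext
      funext i
      rfl)

theorem pt_zigzag {n : ℕ} (a b : Fin (n+1)) :
    Zigzag (J := CostructuredArrow deltaSIncl (DeltaS.mk n)) (pt a) (pt b) := by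
  rcases lt_trichotomy a b with h | h | h
  · exact (Zigzag.of_hom (ptLeft a b h)).trans (Zigzag.of_inv (ptRight a b h))
  · rw [h]
  · exact (Zigzag.of_hom (ptRight b a h)).trans (Zigzag.of_inv (ptLeft b a h))

theorem edge_zigzag_pt {n : ℕ} (a b : Fin (n+1)) (h : a < b) :
    Zigzag (J := CostructuredArrow deltaSIncl (DeltaS.mk n)) (edge a b h) (pt a) :=
  Zigzag.of_inv (ptLeft a b h)

/-- Any object is isomorphic to a pt or an edge, and in fact zigzag connected to pt 0. -/
theorem obj_cases {n : ℕ} (u : CostructuredArrow deltaSIncl (DeltaS.mk n)) :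
    (∃ a, u = pt a) ∨ (∃ a b h, u = edge a b h) := by
  obtain ⟨⟨⟨l⟩, hl⟩, ⟨⟨⟩⟩, f⟩ := u
  interval_cases l
  · left
    refine ⟨f.1 0, ?_⟩
    have hf : f = ⟨fun _ => f.1 0, sm_fin1 _⟩ := by
      apply Subtype.ext; funext i
      exact congrArg f.1 fin1_eq
    rw [hf]; rfl
  · right
    refine ⟨f.1 0, f.1 1, f.2 (by exact Fin.mk_lt_mk.mpr Nat.zero_lt_one), ?_⟩
    have hf : f = ⟨![f.1 0, f.1 1], by
        intro i j hij
        fin_cases i <;> fin_cases j <;> simp_all <;> exact f.2 hij⟩ := by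
      apply Subtype.ext; funext i
      fin_cases i <;> rfl
    rw [hf]; rfl

theorem zigzag_to_pt0 {n : ℕ} (hn : 2 ≤ n) (u : CostructuredArrow deltaSIncl (DeltaS.mk n)) :
    Zigzag u (pt (⟨0, by omega⟩ : Fin (n+1))) := by
  rcases obj_cases u with ⟨a, rfl⟩ | ⟨a, b, h, rfl⟩
  · exact pt_zigzag _ _
  · exact (edge_zigzag_pt a b h).trans (pt_zigzag _ _)

/-- For `n ≥ 2` the comma category `(Δ_{s,≤1})_{/[n]}` is connected: moreover every
object `[0] → [n]` is connected by a zig-zag to an object of the form `[1] → [n]`, and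
any two morphisms `[1] → [n]` are connected by a zig-zag. -/
theorem deltaSLe1_comma_connected (n : ℕ) (hn : 2 ≤ n) :
    CategoryTheory.IsConnected (CostructuredArrow deltaSIncl (DeltaS.mk n)) ∧
    (∀ u : CostructuredArrow deltaSIncl (DeltaS.mk n), u.left.obj.len = 0 →
      ∃ v : CostructuredArrow deltaSIncl (DeltaS.mk n), v.left.obj.len = 1 ∧ Zigzag u v) ∧
    (∀ u v : CostructuredArrow deltaSIncl (DeltaS.mk n),
      u.left.obj.len = 1 → v.left.obj.len = 1 → Zigzag u v) := by
  have h01 : (⟨0, by omega⟩ : Fin (n+1)) < ⟨1, by omega⟩ := Fin.mk_lt_mk.mpr Nat.zero_lt_one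
  have key : ∀ u : CostructuredArrow deltaSIncl (DeltaS.mk n),
      Zigzag u (edge _ _ h01) := fun u =>
    (zigzag_to_pt0 hn u).trans (Zigzag.of_hom (ptLeft _ _ h01))
  refine ⟨?_, ?_, ?_⟩
  · have : Nonempty (CostructuredArrow deltaSIncl (DeltaS.mk n)) := ⟨edge _ _ h01⟩
    exact zigzag_isConnected fun u v => (key u).trans (key v).symm
  · intro u _
    exact ⟨edge _ _ h01, rfl, key u⟩
  · intro u v _ _
    exact (key u).trans (key v).symm
end

section
/- Let C be a category with pullbacks, let p : Y → X be a morphism, and let Y•_s : Δ_s^op → C be the semisimplicial object underlying the Čech nerve of p (so Y•_s([n]) = the (n+1)-fold fiber product Y ×_X Y ×_X ⋯ ×_X Y). Then Y•_s is the pointwise right Kan extension of its restriction to Δ_{s,≤1}^op: the canonical map Y•_s → Ran_{j₁}(Y•_s ∘ j₁) is an isomorphism, where j₁ : Δ_{s,≤1}^op → Δ_s^op is the inclusion. Equivalently, for each n ≥ 2 the object Y ×_X ⋯ ×_X Y (n+1 factors) is the limit over the connected category ((Δ_{s,≤1})_{/[n]})^op of the diagram sending [0] → [n] to Y and [1] →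 [n] to Y ×_X Y. -/
open CategoryTheory CategoryTheory.Limits

/-- The faithful functor `Δ_s ⥤ Δ` to the simplex category. -/
def deltaSToSimplex : DeltaS ⥤ SimplexCategory where
  obj m := SimplexCategory.mk m.len
  map f := SimplexCategory.mkHom ⟨f.1, f.2.monotone⟩
  map_id m := by apply SimplexCategory.Hom.ext; rfl
  map_comp f g := by apply SimplexCategory.Hom.ext; rfl

/-- The object `[0]` of `Δ_{s,≤1}`. -/
def dZero : DeltaSLe1 := ⟨⟨0⟩, Nat.zero_le 1⟩

/-- The object `[1]` of `Δ_{s,≤1}`. -/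
def dOne : DeltaSLe1 := ⟨⟨1⟩, le_refl 1⟩

/-- The map `[0] ⟶ [n]` in `Δ_s` picking out vertex `i`. -/
def hom0 (m : DeltaS) (i : Fin (m.len + 1)) : deltaSIncl.obj dZero ⟶ m :=
  show {f : Fin 1 → Fin (m.len + 1) // StrictMono f} from ⟨fun _ => i, Subsingleton.strictMono _⟩

/-- The map `[1] ⟶ [n]` in `Δ_s` picking out the edge `i < j`. -/
def hom1 (m : DeltaS) (i j : Fin (m.len + 1)) (hij : i < j) : deltaSIncl.obj dOne ⟶ m :=
  show {f : Fin 2 → Fin (m.len + 1) // StrictMono f} from ⟨fun k => if k = 0 then i else j, by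
    intro a b hab
    have ha : a = 0 := by omega
    have hb : b = (1 : Fin 2) := by omega
    simp [ha, hb, hij]⟩

/-- The map `[0] ⟶ a` in `Δ_{s,≤1}` picking out vertex `k`. -/
def hom0' (a : DeltaSLe1) (k : Fin ((deltaSIncl.obj a).len + 1)) : dZero ⟶ a :=
  ObjectProperty.homMk (show {f : Fin 1 → Fin ((deltaSIncl.obj a).len + 1) // StrictMono f} from
    ⟨fun _ => k, Subsingleton.strictMono _⟩)

/-- The map `[0] ⟶ [1]` in `Δ_{s,≤1}` picking out vertex `k`. -/
def vert (k : Fin 2) : dZero ⟶ dOne :=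
  ObjectProperty.homMk (show {f : Fin 1 → Fin 2 // StrictMono f} from ⟨fun _ => k, Subsingleton.strictMono _⟩)


section Helpers

variable {C : Type u} [Category.{v} C] [HasFiniteWidePullbacks C] {X Y : C} (p : Y ⟶ X)

/-- Abbreviation for the semisimplicial object underlying the Čech nerve. -/
noncomputable abbrev cechF : DeltaSᵒᵖ ⥤ C := deltaSToSimplex.op ⋙ (Arrow.mk p).cechNerve

variable (m : DeltaS)
    (s : Cone (StructuredArrow.proj (Opposite.op m) deltaSIncl.op ⋙ (deltaSIncl.op ⋙ cechF p)))

/-- The leg of a cone at the vertex `i`. -/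
noncomputable def coneLeg (i : Fin (m.len + 1)) : s.pt ⟶ Y :=
  s.π.app (StructuredArrow.mk (hom0 m i).op) ≫ WidePullback.π (fun _ : Fin 1 => p) 0

lemma cone_key (g : StructuredArrow (Opposite.op m) deltaSIncl.op)
    (k : Fin ((deltaSIncl.obj g.right.unop).len + 1)) :
    s.π.app g ≫ WidePullback.π (fun _ : Fin ((deltaSIncl.obj g.right.unop).len + 1) => p) k
      = coneLeg p m s ((g.hom.unop).1 k) := by
  let mor : g ⟶ StructuredArrow.mk (hom0 m ((g.hom.unop).1 k)).op :=
    StructuredArrow.homMk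
      (Quiver.Hom.op (hom0' g.right.unop k)) rfl
  have := s.w mor
  rw [coneLeg, ← this]
  dsimp [cechF, deltaSToSimplex, deltaSIncl]
  erw [Category.assoc, WidePullback.lift_π]
  rfl

lemma cone_leg_p (i j : Fin (m.len + 1)) (hij : i < j) :
    coneLeg p m s i ≫ p = coneLeg p m s j ≫ p := by
  let g1 : StructuredArrow (Opposite.op m) deltaSIncl.op :=
    StructuredArrow.mk (hom1 m i j hij).op
  have h0 := cone_key p m s g1 0
  have h1 := cone_key p m s g1 1
  have e0 : ((g1.hom.unop).1 0) = i := rfl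
  have e1 : ((g1.hom.unop).1 1) = j := rfl
  rw [e0] at h0
  rw [e1] at h1
  rw [← h0, ← h1]
  erw [Category.assoc, Category.assoc, WidePullback.π_arrow, WidePullback.π_arrow]

lemma cone_leg_p_zero (i : Fin (m.len + 1)) :
    coneLeg p m s i ≫ p = coneLeg p m s 0 ≫ p := by
  rcases (Fin.zero_le i).lt_or_eq with h | h
  · exact (cone_leg_p p m s 0 i h).symm
  · rw [← h]

end Helpers

/-- The semisimplicial object underlying the Čech nerve of `p : Y ⟶ X` is the
pointwise right Kan extension of its restriction to `Δ_{s,≤1}ᵒᵖ` along the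
inclusion `j₁ᵒᵖ : Δ_{s,≤1}ᵒᵖ ⥤ Δ_sᵒᵖ`: the identity exhibits it as a right Kan
extension of its own restriction. -/

theorem cechNerve_semisimplicial_isRightKanExtension
    {C : Type u} [Category.{v} C] [HasFiniteWidePullbacks C]
    {X Y : C} (p : Y ⟶ X) :
    (deltaSToSimplex.op ⋙ (Arrow.mk p).cechNerve).IsRightKanExtension
      (𝟙 (deltaSIncl.op ⋙ (deltaSToSimplex.op ⋙ (Arrow.mk p).cechNerve))) := by
  have hE : (Functor.RightExtension.mk _
      (𝟙 (deltaSIncl.op ⋙ (deltaSToSimplex.op ⋙ (Arrow.mk p).cechNerve)))).IsPointwiseRightKanExtension := by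
    rintro ⟨m⟩
    dsimp only [Functor.RightExtension.IsPointwiseRightKanExtensionAt]
    refine IsLimit.mk (fun s => WidePullback.lift (coneLeg p m s 0 ≫ p)
      (fun i => coneLeg p m s i) (fun i => cone_leg_p_zero p m s i)) ?_ ?_
    · intro s g
      have hk := fun k => cone_key p m s g k
      apply WidePullback.hom_ext
      · intro k
        dsimp only [Functor.RightExtension.coneAt]
        erw [NatTrans.id_app, Category.comp_id, Category.assoc (WidePullback.lift _ _ _), WidePullback.lift_π,
          WidePullback.lift_π]
        exact (hk k).symm
      · dsimp only [Functor.RightExtension.coneAt]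
        erw [NatTrans.id_app, Category.comp_id, Category.assoc (WidePullback.lift _ _ _), WidePullback.lift_base,
          WidePullback.lift_base]
        refine ((cone_leg_p_zero p m s ((g.hom.unop).1 0)).symm).trans ?_
        refine (congrArg (· ≫ p) (hk 0).symm).trans ?_
        erw [Category.assoc]
        exact congrArg (fun t => s.π.app g ≫ t) (WidePullback.π_arrow _ 0)
    · intro s w hw
      apply WidePullback.hom_ext
      · intro k
        have h' := congrArg (fun f => f ≫ WidePullback.π _ (0 : Fin 1))
          (hw (StructuredArrow.mk (hom0 m k).op))
        dsimp only [Functor.RightExtension.coneAt] at h'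
        erw [Category.assoc, Category.assoc, NatTrans.id_app, Category.id_comp, WidePullback.lift_π] at h'
        simp only [WidePullback.lift_π]
        exact h'
      · have h' := congrArg (fun f => f ≫ WidePullback.base _)
          (hw (StructuredArrow.mk (hom0 m 0).op))
        dsimp only [Functor.RightExtension.coneAt] at h'
        erw [Category.assoc, Category.assoc, NatTrans.id_app, Category.id_comp, WidePullback.lift_base] at h'
        simp only [WidePullback.lift_base]
        have hb : s.π.app (StructuredArrow.mk (hom0 m 0).op)
              ≫ WidePullback.π (fun _ : Fin 1 => p) 0 ≫ p
            = s.π.app (StructuredArrow.mk (hom0 m 0).op)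
              ≫ WidePullback.base (fun _ : Fin 1 => p) :=
          congrArg _ (WidePullback.π_arrow (fun _ : Fin 1 => p) 0)
        erw [← Category.assoc] at hb
        exact h'.trans hb.symm
  exact hE.isRightKanExtension
end
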